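/- The derivations ℒ₀, ℒ₁, ℒ₂ of ℂ[x₂,x₃,x₄] satisfy the commutation relations [ℒ₀, ℒ₁] = ℒ₁, [ℒ₀, ℒ₂] = 2ℒ₂, and [ℒ₁, ℒ₂] = x₂·ℒ₁, i.e. for every polynomial P ∈ ℂ[x₂,x₃,x₄] one has ℒ₀(ℒ₁P) − ℒ₁(ℒ₀P) = ℒ₁P, ℒ₀(ℒ₂P) − ℒ₂(ℒ₀P) = 2ℒ₂P, and ℒ₁(ℒ₂P) − ℒ₂(ℒ₁P) = x₂·ℒ₁P. -/
import Mathlib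


open MvPolynomial

noncomputable section

/-- The polynomial ring ℂ[x₂,x₃,x₄]; `X 0 = x₂`, `X 1 = x₃`, `X 2 = x₄`. -/
abbrev R3 : Type := MvPolynomial (Fin 3) ℂ

def x2 : R3 := X 0
def x3 : R3 := X 1
def x4 : R3 := X 2

/-- ℒ₀ = 2x₂∂/∂x₂ + 3x₃∂/∂x₃ + 4x₄∂/∂x₄ -/
def L0 (P : R3) : R3 :=
  2 * x2 * pderiv (0 : Fin 3) P + 3 * x3 * pderiv (1 : Fin 3) P + 4 * x4 * pderiv (2 : Fin 3) P

/-- ℒ₁ = x₃∂/∂x₂ + x₄∂/∂x₃ + 12x₂x₃∂/∂x₄ -/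
def L1 (P : R3) : R3 :=
  x3 * pderiv (0 : Fin 3) P + x4 * pderiv (1 : Fin 3) P + 12 * x2 * x3 * pderiv (2 : Fin 3) P

/-- ℒ₂ = ((2/3)x₄ − 2x₂²)∂/∂x₂ + 3x₂x₃∂/∂x₃ + (3x₃² + 2x₂x₄)∂/∂x₄ -/
def L2 (P : R3) : R3 :=
  (C (2/3 : ℂ) * x4 - 2 * x2 ^ 2) * pderiv (0 : Fin 3) P + 3 * x2 * x3 * pderiv (1 : Fin 3) P
    + (3 * x3 ^ 2 + 2 * x2 * x4) * pderiv (2 : Fin 3) P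

lemma pderiv_comm' {σ : Type*} [DecidableEq σ] (i j : σ) (P : MvPolynomial σ ℂ) :
    pderiv i (pderiv j P) = pderiv j (pderiv i P) := by
  induction P using MvPolynomial.induction_on with
  | C a => simp
  | add p q hp hq => simp [hp, hq]
  | mul_X p k hp =>
      simp only [pderiv_mul, pderiv_X, map_add, hp]
      rw [Pi.single_apply, Pi.single_apply]
      split_ifs <;> simp <;> ring

lemma pderiv_ofNat' (i : Fin 3) (n : ℕ) [n.AtLeastTwo] :
    pderiv i (no_index (OfNat.ofNat n) : R3) = 0 := by
  rw [← map_ofNat (C : ℂ →+* R3) n]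
  exact pderiv_C

set_option maxHeartbeats 2000000 in
theorem commutation_relations :
    (∀ P : R3, L0 (L1 P) - L1 (L0 P) = L1 P) ∧
    (∀ P : R3, L0 (L2 P) - L2 (L0 P) = 2 * L2 P) ∧
    (∀ P : R3, L1 (L2 P) - L2 (L1 P) = x2 * L1 P) := by
  have h : (3 : R3) * C (2/3 : ℂ) = 2 := by
    rw [← map_ofNat (C : ℂ →+* R3) 3, ← map_mul]
    norm_num [map_ofNat]
  refine ⟨?_, ?_, ?_⟩ <;> intro P <;>
    simp only [L0, L1, L2, x2, x3, x4, map_add, map_sub, pderiv_mul, pderiv_X,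
      pderiv_ofNat', pderiv_C] <;>
    rw [pderiv_comm' 1 0 P, pderiv_comm' 2 0 P, pderiv_comm' 2 1 P] <;>
    simp [pderiv_ofNat', Pi.single_apply, Fin.ext_iff]
  · ring
  · ring
  · linear_combination (4 * X 1 * X 0 * pderiv (0 : Fin 3) P
      - 4 * X 1 * X 2 * pderiv (2 : Fin 3) P) * h

end
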